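/- Let α ≥ 1 be a real number. There exists a constant K ≥ 1, depending only on α, such that for every n×n complex matrix A and every t > 0, ‖Σ_{ℓ=0}^∞ Aˡ t^{(ℓ+1)α−1}/Γ((ℓ+1)α)‖ ≤ K · t^{α−1} · exp(‖A‖ · tᵅ), where ‖·‖ is the operator norm induced by the Euclidean norm. -/

import Mathlib

open scoped Matrix.Norms.L2Operator

/-- Norm of a power of a matrix is at most the power of the norm (L2 operator norm). -/
lemma matrix_norm_pow_le {n : ℕ} (A : Matrix (Fin n) (Fin n) ℂ) (ℓ : ℕ) :
    ‖A ^ ℓ‖ ≤ ‖A‖ ^ ℓ := by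
  cases ℓ with
  | zero =>
    simp only [pow_zero]
    have : ‖(1 : Matrix (Fin n) (Fin n) ℂ)‖ = ‖(1 : EuclideanSpace ℂ (Fin n) →L[ℂ]
        EuclideanSpace ℂ (Fin n))‖ := by
      rw [Matrix.cstar_norm_def, map_one]
    rw [this, ContinuousLinearMap.one_def]
    exact ContinuousLinearMap.norm_id_le
  | succ k => exact norm_pow_le' A (Nat.succ_pos k)

/-- Bound (2.18) of Lemma 2.2(ii): for `α ≥ 1` there is a constant `K ≥ 1`, depending
only on `α`, with `‖Φ_α(t)‖ = ‖Σ_ℓ Aˡ t^{(ℓ+1)α−1}/Γ((ℓ+1)α)‖ ≤ K t^{α−1} exp(‖A‖ tᵅ)`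
for every square complex matrix `A` and every `t > 0`, with the operator norm induced
by the Euclidean norm. -/
theorem phi_alpha_norm_le (α : ℝ) (hα : 1 ≤ α) :
    ∃ K : ℝ, 1 ≤ K ∧ ∀ (n : ℕ) (A : Matrix (Fin n) (Fin n) ℂ) (t : ℝ), 0 < t →
      ‖∑' ℓ : ℕ, ((t ^ ((ℓ + 1) * α - 1) / Real.Gamma ((ℓ + 1) * α) : ℝ) : ℂ) • A ^ ℓ‖ ≤
        K * t ^ (α - 1) * Real.exp (‖A‖ * t ^ α) := by
  have hα0 : 0 < α := lt_of_lt_of_le one_pos hα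
  refine ⟨max 1 (1 / Real.Gamma α), le_max_left _ _, ?_⟩
  set K := max 1 (1 / Real.Gamma α) with hK
  have hK1 : 1 ≤ K := le_max_left _ _
  -- key factorial bound: ℓ! ≤ K * Γ((ℓ+1)α)
  have hfac : ∀ ℓ : ℕ, (ℓ.factorial : ℝ) ≤ K * Real.Gamma ((ℓ + 1) * α) := by
    intro ℓ
    have hΓpos : 0 < Real.Gamma ((ℓ + 1) * α) := by
      apply Real.Gamma_pos_of_pos
      positivity
    cases ℓ with
    | zero =>
      have hΓα : 0 < Real.Gamma α := Real.Gamma_pos_of_pos hα0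
      have : 1 / Real.Gamma α ≤ K := le_max_right _ _
      have h2 : 1 ≤ K * Real.Gamma α := by
        rw [div_le_iff₀ hΓα] at this
        linarith [this]
      simpa using h2.trans_eq (by norm_num)
    | succ k =>
      have h2 : (2 : ℝ) ≤ (k + 1 + 1 : ℕ) := by exact_mod_cast Nat.le_add_left 2 k
      have hle : ((k + 1 + 1 : ℕ) : ℝ) ≤ ((k : ℝ) + 1 + 1) * α := by
        push_cast
        nlinarith [hα, (Nat.cast_nonneg k : (0:ℝ) ≤ k)]
      have hmem1 : ((k + 1 + 1 : ℕ) : ℝ) ∈ Set.Ici (2 : ℝ) := h2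
      have hmem2 : ((k : ℝ) + 1 + 1) * α ∈ Set.Ici (2 : ℝ) := by
        refine le_trans h2 (by push_cast at hle ⊢; linarith)
      have hmono := Real.Gamma_strictMonoOn_Ici.monotoneOn hmem1 hmem2 (by push_cast at hle ⊢; linarith)
      have hΓfac : Real.Gamma ((k + 1 + 1 : ℕ) : ℝ) = (k + 1).factorial := by
        rw [show ((k + 1 + 1 : ℕ) : ℝ) = ((k + 1 : ℕ) : ℝ) + 1 by push_cast; ring]
        exact Real.Gamma_nat_eq_factorial (k + 1)
      have hgoal : ((k + 1).factorial : ℝ) ≤ K * Real.Gamma (((k : ℝ) + 1 + 1) * α) := by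
        calc ((k + 1).factorial : ℝ) = Real.Gamma ((k + 1 + 1 : ℕ) : ℝ) := hΓfac.symm
          _ ≤ Real.Gamma (((k : ℝ) + 1 + 1) * α) := hmono
          _ ≤ K * Real.Gamma (((k : ℝ) + 1 + 1) * α) := by
              nlinarith [Real.Gamma_pos_of_pos (show (0:ℝ) < ((k:ℝ)+1+1)*α by positivity)]
      push_cast at hgoal ⊢
      exact hgoal
  intro n A t ht
  set R : ℝ := ‖A‖ * t ^ α with hR
  have hR0 : 0 ≤ R := by positivity
  -- termwise bound
  have hterm : ∀ ℓ : ℕ,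
      ‖((t ^ ((ℓ + 1) * α - 1) / Real.Gamma ((ℓ + 1) * α) : ℝ) : ℂ) • A ^ ℓ‖ ≤
        K * t ^ (α - 1) * (R ^ ℓ / ℓ.factorial) := by
    intro ℓ
    have hΓpos : 0 < Real.Gamma ((ℓ + 1) * α) := by
      apply Real.Gamma_pos_of_pos; positivity
    have hc0 : (0:ℝ) ≤ t ^ ((ℓ + 1) * α - 1) / Real.Gamma ((ℓ + 1) * α) := by positivity
    rw [norm_smul]
    have hnc : ‖((t ^ ((ℓ + 1) * α - 1) / Real.Gamma ((ℓ + 1) * α) : ℝ) : ℂ)‖ =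
        t ^ ((ℓ + 1) * α - 1) / Real.Gamma ((ℓ + 1) * α) := by
      rw [Complex.norm_real, Real.norm_of_nonneg hc0]
    rw [hnc]
    -- split the power of t
    have hts : t ^ ((ℓ + 1) * α - 1) = t ^ (α - 1) * (t ^ α) ^ ℓ := by
      have : ((ℓ : ℝ) + 1) * α - 1 = (α - 1) + α * ℓ := by ring
      rw [this, Real.rpow_add ht, Real.rpow_mul ht.le, Real.rpow_natCast]
    have hA : ‖A ^ ℓ‖ ≤ ‖A‖ ^ ℓ := matrix_norm_pow_le A ℓ
    have hA0 : 0 ≤ ‖A ^ ℓ‖ := norm_nonneg _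
    have hfacℓ := hfac ℓ
    have hfacpos : (0:ℝ) < ℓ.factorial := by positivity
    calc t ^ ((ℓ + 1) * α - 1) / Real.Gamma ((ℓ + 1) * α) * ‖A ^ ℓ‖
        ≤ t ^ ((ℓ + 1) * α - 1) / Real.Gamma ((ℓ + 1) * α) * ‖A‖ ^ ℓ := by
          apply mul_le_mul_of_nonneg_left hA hc0
      _ ≤ (t ^ ((ℓ + 1) * α - 1) * (K / ℓ.factorial)) * ‖A‖ ^ ℓ := by
          apply mul_le_mul_of_nonneg_right _ (by positivity)
          have ht' : 0 ≤ t ^ ((ℓ + 1) * α - 1) := (Real.rpow_pos_of_pos ht _).le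
          have h1 : 1 / Real.Gamma ((ℓ + 1) * α) ≤ K / ℓ.factorial := by
            rw [div_le_div_iff₀ hΓpos hfacpos]
            linarith [hfacℓ]
          calc t ^ ((ℓ + 1) * α - 1) / Real.Gamma ((ℓ + 1) * α)
              = t ^ ((ℓ + 1) * α - 1) * (1 / Real.Gamma ((ℓ + 1) * α)) := by ring
            _ ≤ t ^ ((ℓ + 1) * α - 1) * (K / ℓ.factorial) :=
                mul_le_mul_of_nonneg_left h1 ht'
      _ = K * t ^ (α - 1) * (R ^ ℓ / ℓ.factorial) := by
          rw [hts, hR, mul_pow]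
          field_simp
  -- summability of the majorant
  have hmaj : Summable (fun ℓ : ℕ => K * t ^ (α - 1) * (R ^ ℓ / ℓ.factorial)) :=
    (Real.summable_pow_div_factorial R).mul_left _
  have hsum : Summable (fun ℓ : ℕ =>
      ‖((t ^ ((ℓ + 1) * α - 1) / Real.Gamma ((ℓ + 1) * α) : ℝ) : ℂ) • A ^ ℓ‖) :=
    Summable.of_nonneg_of_le (fun ℓ => norm_nonneg _) hterm hmaj
  have hexp : ∑' ℓ : ℕ, (R ^ ℓ / ℓ.factorial : ℝ) = Real.exp R := by
    rw [Real.exp_eq_exp_ℝ, NormedSpace.exp_eq_tsum_div]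
  calc ‖∑' ℓ : ℕ, ((t ^ ((ℓ + 1) * α - 1) / Real.Gamma ((ℓ + 1) * α) : ℝ) : ℂ) • A ^ ℓ‖
      ≤ ∑' ℓ : ℕ, ‖((t ^ ((ℓ + 1) * α - 1) / Real.Gamma ((ℓ + 1) * α) : ℝ) : ℂ) • A ^ ℓ‖ :=
        norm_tsum_le_tsum_norm hsum
    _ ≤ ∑' ℓ : ℕ, K * t ^ (α - 1) * (R ^ ℓ / ℓ.factorial) := Summable.tsum_le_tsum hterm hsum hmaj
    _ = K * t ^ (α - 1) * ∑' ℓ : ℕ, (R ^ ℓ / ℓ.factorial : ℝ) := tsum_mul_left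
    _ = K * t ^ (α - 1) * Real.exp R := by rw [hexp]
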